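/- One has the identity 8·E(1/2) − 3·K(1/2) = 6·E(2√2/3); consequently 2π(8E(1/2) − 3K(1/2)) = 12π·E(2√2/3), i.e. the value Λ₁(T_{1,0,2}) = S(1,0,2) coincides with the value Λ₁(τ̃₃,₁) = 12π·E(2√2/3) attained by the bipolar Lawson Klein bottle. -/

import Mathlib

open Real MeasureTheory Set intervalIntegral

/-- The complete elliptic integral of the first kind,
`K(k) = ∫₀¹ dα/(√(1−α²)·√(1−k²α²))`. -/
noncomputable def ellipticK (k : ℝ) : ℝ :=
  ∫ α in (0:ℝ)..1, 1 / (Real.sqrt (1 - α ^ 2) * Real.sqrt (1 - k ^ 2 * α ^ 2))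

/-- The complete elliptic integral of the second kind,
`E(k) = ∫₀¹ √(1−k²α²)/√(1−α²) dα`. -/
noncomputable def ellipticE (k : ℝ) : ℝ :=
  ∫ α in (0:ℝ)..1, Real.sqrt (1 - k ^ 2 * α ^ 2) / Real.sqrt (1 - α ^ 2)


noncomputable def eI (s : ℝ) : ℝ := Real.sqrt (1 - (1/2:ℝ)^2 * s^2) / Real.sqrt (1 - s^2)
noncomputable def kI (s : ℝ) : ℝ := 1 / (Real.sqrt (1 - s^2) * Real.sqrt (1 - (1/2:ℝ)^2 * s^2))
noncomputable def gI (s : ℝ) : ℝ :=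
  Real.sqrt (1 - (2*Real.sqrt 2/3)^2 * s^2) / Real.sqrt (1 - s^2)
noncomputable def ff (s : ℝ) : ℝ := 3*s/(2+s^2)
noncomputable def ffd (s : ℝ) : ℝ := 3*(2-s^2)/(2+s^2)^2
noncomputable def uu (s : ℝ) : ℝ := Real.sqrt ((1-s^2)*(4-s^2))
noncomputable def ph (s : ℝ) : ℝ := -4*s*uu s/(2+s^2)

lemma sq_twosqrt : ((2*Real.sqrt 2/3)^2 : ℝ) = 8/9 := by
  rw [div_pow, mul_pow, sq_sqrt (by norm_num : (2:ℝ) ≥ 0)]; norm_num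

-- basic positivity facts on Ioo 0 1
lemma facts {s : ℝ} (hs : s ∈ Ioo (0:ℝ) 1) :
    0 < 1 - s^2 ∧ 0 < 4 - s^2 ∧ 0 < 2 + s^2 ∧ 0 < 2 - s^2 ∧ 0 < uu s := by
  obtain ⟨h0, h1⟩ := hs
  refine ⟨by nlinarith, by nlinarith, by nlinarith, by nlinarith, ?_⟩
  exact Real.sqrt_pos.2 (mul_pos (by nlinarith) (by nlinarith))

lemma uu_mul {s : ℝ} (hs : s ∈ Ioo (0:ℝ) 1) :
    uu s = Real.sqrt (1 - s^2) * Real.sqrt (4 - s^2) := by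
  rw [uu, Real.sqrt_mul (le_of_lt (facts hs).1)]

lemma sqrt_quarter {s : ℝ} : Real.sqrt (1 - (1/2:ℝ)^2 * s^2) = Real.sqrt (4 - s^2) / 2 := by
  rw [show (1 - (1/2:ℝ)^2 * s^2) = (4 - s^2)/4 by ring,
    Real.sqrt_div' (4 - s^2) (by norm_num : (0:ℝ) ≤ 4),
    show Real.sqrt 4 = 2 by
      rw [show (4:ℝ) = 2^2 by norm_num, Real.sqrt_sq (by norm_num : (0:ℝ) ≤ 2)]]

-- the integrable dominating function
lemma dom_int : IntegrableOn (fun s : ℝ => 2 / Real.sqrt (1 - s)) (Ioo 0 1) := by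
  have h1 : IntervalIntegrable (fun x : ℝ => x ^ (-(1/2) : ℝ)) volume 0 1 :=
    intervalIntegral.intervalIntegrable_rpow' (by norm_num)
  have h2 : IntervalIntegrable (fun x : ℝ => 2 * (1 - x) ^ (-(1/2) : ℝ)) volume 0 1 := by
    have := ((h1.comp_sub_left 1).const_mul 2).symm
    simpa using this
  have h3 : IntegrableOn (fun x : ℝ => 2 * (1 - x) ^ (-(1/2) : ℝ)) (Ioo 0 1) :=
    ((intervalIntegrable_iff_integrableOn_Ioo_of_le (by norm_num)).1 h2)
  refine h3.congr_fun (fun s hs => ?_) measurableSet_Ioo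
  have h4 : (0:ℝ) ≤ 1 - s := by have := hs.2; linarith
  beta_reduce; rw [Real.rpow_neg h4, ← Real.sqrt_eq_rpow, div_eq_mul_inv]

lemma int_of_bound {F : ℝ → ℝ} (hc : ContinuousOn F (Ioo 0 1))
    (hb : ∀ s ∈ Ioo (0:ℝ) 1, |F s| ≤ 2 / Real.sqrt (1 - s)) : IntegrableOn F (Ioo 0 1) := by
  refine dom_int.mono' (hc.aestronglyMeasurable measurableSet_Ioo) ?_
  filter_upwards [ae_restrict_mem measurableSet_Ioo] with s hs
  rw [Real.norm_eq_abs]; exact hb s hs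

lemma sqrt_one_sub_le {s : ℝ} (hs : s ∈ Ioo (0:ℝ) 1) :
    Real.sqrt (1 - s) ≤ Real.sqrt (1 - s^2) := by
  apply Real.sqrt_le_sqrt; nlinarith [hs.1, hs.2]

lemma sqrt_one_sub_pos {s : ℝ} (hs : s ∈ Ioo (0:ℝ) 1) : 0 < Real.sqrt (1 - s) :=
  Real.sqrt_pos.2 (by linarith [hs.2])

lemma sqrt_ne {s : ℝ} (hs : s ∈ Ioo (0:ℝ) 1) : Real.sqrt (1 - s^2) ≠ 0 :=
  ne_of_gt (Real.sqrt_pos.2 (facts hs).1)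

lemma int_aux {c : ℝ} (hc : 0 ≤ c) :
    IntegrableOn (fun s => Real.sqrt (1 - c*s^2) / Real.sqrt (1 - s^2)) (Ioo 0 1) := by
  refine int_of_bound ?_ ?_
  · exact ((Real.continuous_sqrt.comp (by continuity)).continuousOn).div
      ((Real.continuous_sqrt.comp (by continuity)).continuousOn) (fun s hs => sqrt_ne hs)
  · intro s hs
    rw [abs_of_nonneg (div_nonneg (Real.sqrt_nonneg _) (Real.sqrt_nonneg _))]
    exact div_le_div₀ (by norm_num)
      ((Real.sqrt_le_one.2 (by nlinarith [mul_nonneg hc (sq_nonneg s)])).trans (by norm_num))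
      (sqrt_one_sub_pos hs) (sqrt_one_sub_le hs)

-- integrability of the three integrands
lemma eI_int : IntegrableOn eI (Ioo 0 1) := int_aux (by norm_num)

lemma gI_int : IntegrableOn gI (Ioo 0 1) := int_aux (sq_nonneg _)

lemma kI_int : IntegrableOn kI (Ioo 0 1) := by
  refine int_of_bound ?_ ?_
  · exact continuousOn_const.div
      (((Real.continuous_sqrt.comp (by continuity)).continuousOn).mul
        ((Real.continuous_sqrt.comp (by continuity)).continuousOn))
      (fun s hs => mul_ne_zero (sqrt_ne hs)
        (ne_of_gt (Real.sqrt_pos.2 (by nlinarith [hs.1, hs.2]))))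
  · intro s hs
    have hp := sqrt_one_sub_pos hs
    have hhalf : (1/2 : ℝ) ≤ Real.sqrt (1 - (1/2:ℝ)^2 * s^2) := by
      rw [Real.le_sqrt (by norm_num) (by nlinarith [hs.1, hs.2])]
      nlinarith [hs.1, hs.2]
    have hb : Real.sqrt (1 - s) * (1/2) ≤
        Real.sqrt (1 - s^2) * Real.sqrt (1 - (1/2:ℝ)^2 * s^2) :=
      mul_le_mul (sqrt_one_sub_le hs) hhalf (by norm_num) (Real.sqrt_nonneg _)
    rw [kI, abs_of_nonneg (by positivity)]
    calc 1 / (Real.sqrt (1 - s^2) * Real.sqrt (1 - (1/2:ℝ)^2 * s^2))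
        ≤ 1 / (Real.sqrt (1 - s) * (1/2)) :=
          one_div_le_one_div_of_le (by positivity) hb
      _ = 2 / Real.sqrt (1 - s) := by field_simp

-- elliptic values as Ioo integrals
lemma ellipticE_half : ellipticE (1/2) = ∫ s in Ioo (0:ℝ) 1, eI s := by
  rw [ellipticE, intervalIntegral.integral_of_le (by norm_num),
    integral_Ioc_eq_integral_Ioo]; rfl
lemma ellipticK_half : ellipticK (1/2) = ∫ s in Ioo (0:ℝ) 1, kI s := by
  rw [ellipticK, intervalIntegral.integral_of_le (by norm_num),
    integral_Ioc_eq_integral_Ioo]; rfl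
lemma ellipticE_ts : ellipticE (2*Real.sqrt 2/3) = ∫ s in Ioo (0:ℝ) 1, gI s := by
  rw [ellipticE, intervalIntegral.integral_of_le (by norm_num),
    integral_Ioc_eq_integral_Ioo]; rfl

-- f maps Ioo 0 1 onto itself, strictly monotonically
lemma ff_deriv {s : ℝ} : HasDerivAt ff (ffd s) s := by
  have h2 : HasDerivAt (fun s : ℝ => 2 + s^2) (2*s) s := by
    simpa using (hasDerivAt_pow 2 s).const_add 2
  have h1 : HasDerivAt (fun s : ℝ => 3*s) 3 s := by
    simpa using (hasDerivAt_id s).const_mul 3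
  have h := h1.div h2 (by positivity)
  refine h.congr_deriv ?_
  rw [ffd]; field_simp; ring

lemma ff_cont : Continuous ff := by
  apply Continuous.div (by continuity) (by continuity)
  intro s; positivity

lemma ff_mono : StrictMonoOn ff (Icc 0 1) := by
  intro a ha b hb hab
  rw [ff, ff, div_lt_div_iff₀ (by positivity) (by positivity)]
  have h2 : 0 < (b - a) * (2 - a*b) :=
    mul_pos (by linarith) (by nlinarith [mul_le_one₀ ha.2 hb.1 hb.2])
  nlinarith [h2]

lemma ff_image : ff '' (Ioo 0 1) = Ioo 0 1 := by
  apply Subset.antisymm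
  · rintro y ⟨s, hs, rfl⟩
    constructor
    · exact div_pos (by linarith [hs.1]) (by positivity)
    · rw [ff, div_lt_one (by positivity)]; nlinarith [hs.1, hs.2]
  · have h := intermediate_value_Ioo (by norm_num : (0:ℝ) ≤ 1) ff_cont.continuousOn
    have h0 : ff 0 = 0 := by rw [ff]; norm_num
    have h1 : ff 1 = 1 := by rw [ff]; norm_num
    rwa [h0, h1] at h

-- change of variables
lemma change_var :
    ∫ s in Ioo (0:ℝ) 1, gI s = ∫ s in Ioo (0:ℝ) 1, |ffd s| • gI (ff s) := by
  conv_lhs => rw [← ff_image]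
  exact integral_image_eq_integral_abs_deriv_smul measurableSet_Ioo
    (fun s _ => ff_deriv.hasDerivWithinAt) (ff_mono.injOn.mono Ioo_subset_Icc_self) gI

-- pointwise identity A:  8 e − 3 k = 2(5−2s²)/u
lemma idA {s : ℝ} (hs : s ∈ Ioo (0:ℝ) 1) :
    8 * eI s - 3 * kI s = 2*(5 - 2*s^2) / uu s := by
  obtain ⟨h1, h4, -, -, -⟩ := facts hs
  have hA : 0 < Real.sqrt (1 - s^2) := Real.sqrt_pos.2 h1
  have hB : 0 < Real.sqrt (4 - s^2) := Real.sqrt_pos.2 h4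
  have hA2 : Real.sqrt (1 - s^2) ^ 2 = 1 - s^2 := Real.sq_sqrt h1.le
  have hB2 : Real.sqrt (4 - s^2) ^ 2 = 4 - s^2 := Real.sq_sqrt h4.le
  rw [eI, kI, sqrt_quarter, uu_mul hs]
  field_simp
  linear_combination 8 * hB2

-- pointwise identity B:  |f'| • (6 g∘f) = 18(2−s²)²/((2+s²)² u)
lemma idB {s : ℝ} (hs : s ∈ Ioo (0:ℝ) 1) :
    |ffd s| • (6 * gI (ff s)) = 18*(2 - s^2)^2 / ((2 + s^2)^2 * uu s) := by
  obtain ⟨h1, h4, h2p, h2m, hU⟩ := facts hs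
  have habs : |ffd s| = 3*(2 - s^2)/(2 + s^2)^2 := by
    rw [ffd, abs_of_pos (by positivity)]
  have hnum : Real.sqrt (1 - (2*Real.sqrt 2/3)^2 * (ff s)^2) = (2 - s^2)/(2 + s^2) := by
    rw [show 1 - (2*Real.sqrt 2/3)^2 * (ff s)^2 = ((2 - s^2)/(2 + s^2))^2 by
      rw [sq_twosqrt, ff]; field_simp; ring]
    exact Real.sqrt_sq (by positivity)
  have hden : Real.sqrt (1 - (ff s)^2) = uu s / (2 + s^2) := by
    rw [show 1 - (ff s)^2 = ((1 - s^2)*(4 - s^2))/(2 + s^2)^2 by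
      rw [ff]; field_simp; ring]
    rw [Real.sqrt_div' _ (by positivity), uu, Real.sqrt_sq (by positivity)]
  rw [smul_eq_mul, habs, gI, hnum, hden]
  rw [uu] at hU ⊢
  field_simp
  ring

-- derivative of the correction term
lemma ph_deriv {s : ℝ} (hs : s ∈ Ioo (0:ℝ) 1) :
    HasDerivAt ph (2*(5 - 2*s^2) / uu s - 18*(2 - s^2)^2 / ((2 + s^2)^2 * uu s)) s := by
  obtain ⟨h1, h4, h2p, h2m, hU⟩ := facts hs
  have hU2 : uu s ^ 2 = (1 - s^2) * (4 - s^2) := Real.sq_sqrt (by positivity)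
  have hp : HasDerivAt (fun s : ℝ => (1 - s^2)*(4 - s^2)) (4*s^3 - 10*s) s := by
    have ha : HasDerivAt (fun s : ℝ => 1 - s^2) (-(2*s)) s := by
      simpa using (hasDerivAt_pow 2 s).const_sub 1
    have hb : HasDerivAt (fun s : ℝ => 4 - s^2) (-(2*s)) s := by
      simpa using (hasDerivAt_pow 2 s).const_sub 4
    refine (ha.mul hb).congr_deriv ?_; ring
  have hu : HasDerivAt uu ((4*s^3 - 10*s) / (2 * uu s)) s := by
    have := hp.sqrt (by positivity)
    exact this
  have hnum : HasDerivAt (fun s : ℝ => -4*s*uu s)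
      ((-4) * uu s + (-4*s) * ((4*s^3 - 10*s) / (2 * uu s))) s := by
    have hid : HasDerivAt (fun s : ℝ => -4*s) (-4) s := by
      simpa using (hasDerivAt_id s).const_mul (-4)
    exact hid.mul hu
  have hden : HasDerivAt (fun s : ℝ => 2 + s^2) (2*s) s := by
    simpa using (hasDerivAt_pow 2 s).const_add 2
  have h := hnum.div hden (by positivity)
  have heq : ph = fun s : ℝ => -4*s*uu s / (2 + s^2) := by funext x; rw [ph]
  rw [heq]
  refine h.congr_deriv ?_
  field_simp
  ring_nf
  linear_combination (8*s^2 - 16) * hU2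

lemma ph_cont : ContinuousOn ph (Icc 0 1) := by
  have : Continuous ph := by
    apply Continuous.div
    · exact (by continuity : Continuous fun s : ℝ => -4*s).mul
        (Real.continuous_sqrt.comp (by continuity))
    · continuity
    · intro s; positivity
  exact this.continuousOn


/-- `8·E(1/2) − 3·K(1/2) = 6·E(2√2/3)`; consequently
`2π(8E(1/2) − 3K(1/2)) = 12π·E(2√2/3)`, i.e. the value `Λ₁(T_{1,0,2}) = S(1,0,2)`
coincides with the value `Λ₁(τ̃₃,₁) = 12π·E(2√2/3)` attained by the bipolar Lawson
Klein bottle. -/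
theorem S_102_eq_bipolar_lawson_value :
    8 * ellipticE (1 / 2) - 3 * ellipticK (1 / 2) = 6 * ellipticE (2 * Real.sqrt 2 / 3) ∧
    2 * Real.pi * (8 * ellipticE (1 / 2) - 3 * ellipticK (1 / 2)) =
      12 * Real.pi * ellipticE (2 * Real.sqrt 2 / 3) := by
  have key : 8 * ellipticE (1/2) - 3 * ellipticK (1/2) = 6 * ellipticE (2*Real.sqrt 2/3) := by
    rw [ellipticE_half, ellipticK_half, ellipticE_ts, change_var]
    have hGint : IntegrableOn (fun s => |ffd s| • gI (ff s)) (Ioo (0:ℝ) 1) :=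
      (integrableOn_image_iff_integrableOn_abs_deriv_smul measurableSet_Ioo
        (fun s _ => ff_deriv.hasDerivWithinAt) (ff_mono.injOn.mono Ioo_subset_Icc_self) gI).1
        (by rw [ff_image]; exact gI_int)
    have hcombo : IntegrableOn
        (fun s => (8*eI s - 3*kI s) - 6*(|ffd s| • gI (ff s))) (Ioo (0:ℝ) 1) :=
      ((eI_int.const_mul 8).sub (kI_int.const_mul 3)).sub (hGint.const_mul 6)
    have hDD : ∀ s ∈ Ioo (0:ℝ) 1, (8*eI s - 3*kI s) - 6*(|ffd s| • gI (ff s))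
        = 2*(5 - 2*s^2)/uu s - 18*(2 - s^2)^2/((2 + s^2)^2*uu s) := by
      intro s hs
      rw [← idA hs, ← idB hs]; simp only [smul_eq_mul]; ring
    have hint : IntervalIntegrable
        (fun s => 2*(5 - 2*s^2)/uu s - 18*(2 - s^2)^2/((2 + s^2)^2*uu s)) volume 0 1 := by
      rw [intervalIntegrable_iff_integrableOn_Ioo_of_le (by norm_num)]
      exact hcombo.congr_fun hDD measurableSet_Ioo
    have hFTC := intervalIntegral.integral_eq_sub_of_hasDeriv_right_of_le (by norm_num) ph_cont
        (fun s hs => (ph_deriv hs).hasDerivWithinAt) hint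
    have hzero : ∫ s in Ioo (0:ℝ) 1,
        (2*(5 - 2*s^2)/uu s - 18*(2 - s^2)^2/((2 + s^2)^2*uu s)) = 0 := by
      have hb1 : ph 1 = 0 := by simp [ph, uu]
      have hb0 : ph 0 = 0 := by simp [ph]
      rw [← integral_Ioc_eq_integral_Ioo, ← intervalIntegral.integral_of_le (by norm_num),
        hFTC, hb1, hb0]; ring
    have hzero2 : ∫ s in Ioo (0:ℝ) 1,
        ((8*eI s - 3*kI s) - 6*(|ffd s| • gI (ff s))) = 0 := by
      rw [setIntegral_congr_fun measurableSet_Ioo hDD]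
      exact hzero
    have hsplit : ∫ s in Ioo (0:ℝ) 1, (8*eI s - 3*kI s - 6*(|ffd s| • gI (ff s)))
        = 8*(∫ s in Ioo (0:ℝ) 1, eI s) - 3*(∫ s in Ioo (0:ℝ) 1, kI s)
          - 6*(∫ s in Ioo (0:ℝ) 1, |ffd s| • gI (ff s)) := by
      have hEK : IntegrableOn (fun s => 8*eI s - 3*kI s) (Ioo (0:ℝ) 1) :=
        (eI_int.const_mul 8).sub (kI_int.const_mul 3)
      have hG6 : IntegrableOn (fun s => 6*(|ffd s| • gI (ff s))) (Ioo (0:ℝ) 1) :=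
        hGint.const_mul 6
      have h8 : IntegrableOn (fun s => 8*eI s) (Ioo (0:ℝ) 1) := eI_int.const_mul 8
      have h3 : IntegrableOn (fun s => 3*kI s) (Ioo (0:ℝ) 1) := kI_int.const_mul 3
      rw [integral_sub hEK hG6, integral_sub h8 h3,
        MeasureTheory.integral_const_mul, MeasureTheory.integral_const_mul,
        MeasureTheory.integral_const_mul]
    rw [hsplit] at hzero2
    linarith
  exact ⟨key, by rw [key]; ring⟩
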